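/- (Single-worker QG-DSGDm-N simplification.) Let f : ℝ^d → ℝ be differentiable, η > 0, β, μ ∈ [0,1) with β̂ := μ + (1−μ)β > 0. Define sequences (x^t), (m^t) by m^0 = 0 and, for t ≥ 1: h^t := βm^{t−1} + ∇f(x^t + βm^{t−1}), x^{t+1} = x^t − ηh^t, and m^t = μm^{t−1} + (1−μ)(x^t − x^{t+1})/η. Then the rescaled momentum m̂^t := m^t/(1−μ) satisfies, for all t ≥ 1, with the look-ahead point z^t := x^t + β(1−μ)m̂^{t−1}: m̂^t = β̂ m̂^{t−1} + ∇f(z^t) and x^{t+1} = x^t − η((1 − μ/β̂)m̂^t + (μ/β̂)∇f(z^t)). -/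

import Mathlib

noncomputable section

/-- **Single-worker QG-DSGDm-N simplification.**
With `m^0 = 0` and, for `t ≥ 1`, the Nesterov-style update
`x^{t+1} = x^t − η(βm^{t−1} + ∇f(x^t + βm^{t−1}))`,
`m^t = μm^{t−1} + (1−μ)(x^t − x^{t+1})/η`, the rescaled momentum
`m̂^t := m^t/(1−μ)` satisfies, with `β̂ := μ + (1−μ)β` and look-ahead point
`z^t := x^t + β(1−μ)m̂^{t−1}`: `m̂^t = β̂m̂^{t−1} + ∇f(z^t)` and
`x^{t+1} = x^t − η((1 − μ/β̂)m̂^t + (μ/β̂)∇f(z^t))`. -/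
theorem single_worker_qg_dsgdmn_simplification (d : ℕ)
    (f : EuclideanSpace ℝ (Fin d) → ℝ) (hf : Differentiable ℝ f)
    (η β μ : ℝ) (hη : 0 < η) (hβ0 : 0 ≤ β) (hβ1 : β < 1)
    (hμ0 : 0 ≤ μ) (hμ1 : μ < 1) (hbhat : 0 < μ + (1 - μ) * β)
    (x m : ℕ → EuclideanSpace ℝ (Fin d))
    (hm0 : m 0 = 0)
    (hx : ∀ t, 1 ≤ t →
      x (t + 1) = x t - η • (β • m (t - 1) + gradient f (x t + β • m (t - 1))))
    (hm : ∀ t, 1 ≤ t → m t = μ • m (t - 1) + ((1 - μ) / η) • (x t - x (t + 1))) :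
    ∀ t, 1 ≤ t →
      (1 - μ)⁻¹ • m t
        = (μ + (1 - μ) * β) • ((1 - μ)⁻¹ • m (t - 1))
          + gradient f (x t + (β * (1 - μ)) • ((1 - μ)⁻¹ • m (t - 1))) ∧
      x (t + 1) = x t - η • ((1 - μ / (μ + (1 - μ) * β)) • ((1 - μ)⁻¹ • m t)
        + (μ / (μ + (1 - μ) * β)) •
            gradient f (x t + (β * (1 - μ)) • ((1 - μ)⁻¹ • m (t - 1)))) := by
  intro t ht
  have h1 : (1 - μ : ℝ) ≠ 0 := by linarith
  have hη' : (η : ℝ) ≠ 0 := ne_of_gt hη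
  have hb : (μ + (1 - μ) * β : ℝ) ≠ 0 := ne_of_gt hbhat
  have hkey : (β * (1 - μ)) • ((1 - μ)⁻¹ • m (t - 1)) = β • m (t - 1) := by
    rw [smul_smul]; congr 1; field_simp
  rw [hkey]
  have hmt : m t = μ • m (t - 1) + ((1 - μ) / η) • (x t - x (t + 1)) := hm t ht
  have hxt : x (t + 1) = x t - η • (β • m (t - 1) + gradient f (x t + β • m (t - 1))) :=
    hx t ht
  rw [hxt] at hmt
  constructor
  · rw [hmt]
    match_scalars
    all_goals field_simp
    all_goals try ring
    all_goals simp
  · rw [hmt, hxt]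
    match_scalars
    all_goals field_simp
    all_goals try ring
    all_goals
      have hb2 : β - β * μ + μ ≠ 0 := by linarith
      field_simp
      have hb3 : β * (1 - μ) + μ ≠ 0 := by linarith
      field_simp
      ring

end
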